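/- arXiv:2605.04195 — 5 statements merged into one kernel-verified Lean document; each statement's English description precedes it below -/
import Mathlib

section
/- Let p be an odd prime and Δ a cyclic group of order p^s with generator δ. Then the fixed subring ℤ_p[Δ]⁺ of the group algebra ℤ_p[Δ] under the involution inverting group-like elements is generated as a ℤ_p-algebra by the element [δ] + [δ⁻¹] - 2. -/
/-- For `p` an odd prime and `Δ` a cyclic group of order `p^s` with generator `δ`, the fixed
subring `ℤ_p[Δ]⁺` of the group algebra `ℤ_p[Δ]` under the involution inverting group-like
elements is generated as a `ℤ_p`-algebra by `[δ] + [δ⁻¹] - 2`. -/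
theorem stmt_1 (p : ℕ) [Fact p.Prime] (hodd : Odd p) (s : ℕ) (hs : 1 ≤ s)
    (Δ : Type) [CommGroup Δ] [Fintype Δ] (hcard : Fintype.card Δ = p ^ s)
    (δ : Δ) (hδ : ∀ x : Δ, x ∈ Subgroup.zpowers δ) :
    Algebra.adjoin (PadicInt p)
        {MonoidAlgebra.of (PadicInt p) Δ δ + MonoidAlgebra.of (PadicInt p) Δ δ⁻¹ - 2}
      = AlgHom.equalizer
          (MonoidAlgebra.domCongr (PadicInt p) (PadicInt p) (MulEquiv.inv Δ)).toAlgHom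
          (AlgHom.id (PadicInt p) (MonoidAlgebra (PadicInt p) Δ)) := by
  classical
  set σ := (MonoidAlgebra.domCongr (PadicInt p) (PadicInt p) (MulEquiv.inv Δ)).toAlgHom with hσ
  set a := MonoidAlgebra.of (PadicInt p) Δ with ha
  set u : MonoidAlgebra (PadicInt p) Δ := a δ + a δ⁻¹ with hu
  have hσof : ∀ g : Δ, σ (a g) = a g⁻¹ := by
    intro g
    simp [hσ, ha, MonoidAlgebra.of_apply]
  have hσu : σ u = u := by
    rw [hu, map_add, hσof, hσof, inv_inv, add_comm]
  have h2mem : ∀ S : Subalgebra (PadicInt p) (MonoidAlgebra (PadicInt p) Δ),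
      (2 : MonoidAlgebra (PadicInt p) Δ) ∈ S := by
    intro S
    have := S.algebraMap_mem 2
    rwa [map_ofNat] at this
  have hadj : Algebra.adjoin (PadicInt p) {u - 2} = Algebra.adjoin (PadicInt p) {u} := by
    apply le_antisymm <;> rw [Algebra.adjoin_le_iff] <;> rintro x rfl
    · exact sub_mem (Algebra.self_mem_adjoin_singleton _ u) (h2mem _)
    · have := add_mem (Algebra.self_mem_adjoin_singleton (PadicInt p) (u - 2))
        (h2mem (Algebra.adjoin (PadicInt p) {u - 2}))
      simpa using this
  rw [hadj]
  have key : ∀ n : ℕ, a (δ ^ n) + a (δ⁻¹ ^ n) ∈ Algebra.adjoin (PadicInt p) {u} := by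
    intro n
    induction n using Nat.twoStepInduction with
    | zero =>
      have : a (δ ^ 0) + a (δ⁻¹ ^ 0) = 2 := by
        simp [one_add_one_eq_two]
      rw [this]; exact h2mem _
    | one => simp only [pow_one]; exact Algebra.self_mem_adjoin_singleton (PadicInt p) u
    | more n ih0 ih1 =>
      have e1 : a δ * a (δ ^ (n+1)) = a (δ ^ (n+2)) := by rw [← map_mul]; congr 1; group
      have e2 : a δ⁻¹ * a (δ⁻¹ ^ (n+1)) = a (δ⁻¹ ^ (n+2)) := by rw [← map_mul]; congr 1; group
      have e3 : a δ⁻¹ * a (δ ^ (n+1)) = a (δ ^ n) := by rw [← map_mul]; congr 1; group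
      have e4 : a δ * a (δ⁻¹ ^ (n+1)) = a (δ⁻¹ ^ n) := by rw [← map_mul]; congr 1; group
      have hmul : u * (a (δ ^ (n + 1)) + a (δ⁻¹ ^ (n + 1)))
          = (a (δ ^ (n + 2)) + a (δ⁻¹ ^ (n + 2))) + (a (δ ^ n) + a (δ⁻¹ ^ n)) := by
        have expand : (a δ + a δ⁻¹) * (a (δ ^ (n+1)) + a (δ⁻¹ ^ (n+1)))
            = a δ * a (δ ^ (n+1)) + a δ⁻¹ * a (δ⁻¹ ^ (n+1))
              + (a δ⁻¹ * a (δ ^ (n+1)) + a δ * a (δ⁻¹ ^ (n+1))) := by ring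
        rw [hu, expand, e1, e2, e3, e4]
      have heq : a (δ ^ (n + 2)) + a (δ⁻¹ ^ (n + 2))
          = u * (a (δ ^ (n + 1)) + a (δ⁻¹ ^ (n + 1))) - (a (δ ^ n) + a (δ⁻¹ ^ n)) := by
        rw [hmul]; ring
      rw [heq]
      exact sub_mem (mul_mem (Algebra.self_mem_adjoin_singleton _ u) ih1) ih0
  have hall : ∀ g : Δ, a g + a g⁻¹ ∈ Algebra.adjoin (PadicInt p) {u} := by
    intro g
    obtain ⟨k, hk⟩ := Subgroup.mem_zpowers_iff.mp (hδ g)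
    cases k with
    | ofNat n =>
      rw [Int.ofNat_eq_coe, zpow_natCast] at hk
      subst hk
      simpa [inv_pow] using key n
    | negSucc n =>
      rw [zpow_negSucc] at hk
      subst hk
      simpa [inv_pow, add_comm] using key (n + 1)
  have hsum : ∀ x : MonoidAlgebra (PadicInt p) Δ,
      x + σ x ∈ Algebra.adjoin (PadicInt p) {u} := by
    intro x
    refine MonoidAlgebra.induction_on (motive := fun y => y + σ y ∈ Algebra.adjoin (PadicInt p) {u}) x ?_ ?_ ?_
    · intro g
      show a g + σ (a g) ∈ Algebra.adjoin (PadicInt p) {u}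
      rw [hσof g]
      exact hall g
    · intro f g hf hg
      rw [map_add]
      have := add_mem hf hg
      convert this using 1
      ring
    · intro r f hf
      rw [map_smul, ← smul_add]
      exact Subalgebra.smul_mem _ hf r
  have h2unit : IsUnit (2 : PadicInt p) := by
    rw [PadicInt.isUnit_iff]
    apply le_antisymm (PadicInt.norm_le_one _)
    by_contra h
    push_neg at h
    have hc : ((2 : ℤ) : PadicInt p) = (2 : PadicInt p) := by push_cast; ring
    rw [← hc] at h
    have hdvd := (PadicInt.norm_int_lt_one_iff_dvd (p := p) 2).mp h
    have hp := (Fact.out : p.Prime)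
    have : (p : ℤ) ∣ 2 := hdvd
    have hple : p ≤ 2 := by
      have := Int.le_of_dvd (by norm_num) this
      exact_mod_cast this
    rcases hodd with ⟨m, hm⟩
    have h2le : 2 ≤ p := hp.two_le
    omega
  apply le_antisymm
  · rw [Algebra.adjoin_le_iff]
    rintro x rfl
    simp only [SetLike.mem_coe, AlgHom.mem_equalizer, map_sub, hσu]
    simp
  · intro x hx
    rw [AlgHom.mem_equalizer] at hx
    simp only [AlgHom.coe_id, id_eq] at hx
    obtain ⟨v, hv⟩ := h2unit
    have hx2 : ((v : PadicInt p) • x) ∈ Algebra.adjoin (PadicInt p) {u} := by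
      have h := hsum x
      rw [hx] at h
      rw [hv, two_smul]
      exact h
    have hxx : x = (↑v⁻¹ : PadicInt p) • ((v : PadicInt p) • x) := by
      rw [smul_smul]
      simp
    rw [hxx]
    exact Subalgebra.smul_mem _ hx2 _
end

section
/- Let N be prime and p ≥ 5 with p dividing N-1, and let s = v_p(N-1). In the power series ring ℤ_p⟦λ - 1⟧, the elements (λ^{N+1} - 1)/(λ - 1) and (λ^{N-1} - 1)/(λ^{p^s} - 1) are units. -/
open PowerSeries Finset

lemma nat_unit_padic (p : ℕ) [Fact p.Prime] {n : ℕ} (h : ¬ p ∣ n) :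
    IsUnit (n : PadicInt p) := by
  rw [PadicInt.isUnit_iff]
  have h1 : ¬ ((p : ℤ) ∣ (n : ℤ)) := by exact_mod_cast h
  have := (PadicInt.norm_int_lt_one_iff_dvd (p := p) n).not.mpr h1
  have hle : ‖((n : ℤ) : PadicInt p)‖ ≤ 1 := PadicInt.norm_le_one _
  push_cast at this hle ⊢
  linarith [lt_or_eq_of_le hle |>.resolve_left this]

lemma geom_unit (p : ℕ) [Fact p.Prime] (a : PowerSeries (PadicInt p))
    (ha : constantCoeff (R := PadicInt p) a = 1) (n : ℕ) (hn : ¬ p ∣ n) :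
    IsUnit (∑ i ∈ range n, a ^ i) ∧
      (a - 1) * (∑ i ∈ range n, a ^ i) = a ^ n - 1 := by
  constructor
  · rw [PowerSeries.isUnit_iff_constantCoeff, map_sum]
    simp only [map_pow, ha, one_pow, sum_const, card_range, nsmul_eq_mul, mul_one]
    exact nat_unit_padic p hn
  · rw [mul_comm, geom_sum_mul]

/-- In `ℤ_p⟦λ - 1⟧` (modelled as power series in `T = λ - 1`, with `λ = 1 + T`), the
quotients `(λ^{N+1} - 1)/(λ - 1)` and `(λ^{N-1} - 1)/(λ^{p^s} - 1)` exist and are units,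
where `N` is prime, `p ≥ 5` is prime with `p ∣ N - 1`, and `s = v_p(N - 1)`. -/
theorem stmt_3 (p N : ℕ) [Fact p.Prime] (hN : N.Prime) (hp5 : 5 ≤ p)
    (hdvd : p ∣ N - 1) (s : ℕ) (hs : s = padicValNat p (N - 1)) :
    ∃ u w : PowerSeries (PadicInt p),
      IsUnit u ∧ IsUnit w ∧
      ((1 + PowerSeries.X : PowerSeries (PadicInt p)) - 1) * u
          = (1 + PowerSeries.X) ^ (N + 1) - 1 ∧
      ((1 + PowerSeries.X : PowerSeries (PadicInt p)) ^ (p ^ s) - 1) * w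
          = (1 + PowerSeries.X) ^ (N - 1) - 1 := by
  have hp := (Fact.out : p.Prime)
  have hN2 : 2 ≤ N := hN.two_le
  have hN1pos : N - 1 ≠ 0 := by omega
  have hNp : p ≤ N - 1 := Nat.le_of_dvd (by omega) hdvd
  -- p ∤ N + 1
  have h1 : ¬ p ∣ (N + 1) := by
    intro h
    have h2 : p ∣ 2 := by
      have := Nat.dvd_sub h hdvd
      rwa [show N + 1 - (N - 1) = 2 by omega] at this
    have := Nat.le_of_dvd (by norm_num) h2
    omega
  have hc : constantCoeff (R := PadicInt p) (1 + X) = 1 := by simp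
  obtain ⟨hu, hu'⟩ := geom_unit p (1 + X) hc (N + 1) h1
  set m := (N - 1) / p ^ s with hm
  have hms : p ^ s * m = N - 1 := by
    rw [hm, hs]
    exact Nat.mul_div_cancel' (pow_padicValNat_dvd) |>.symm ▸ rfl
  have h2 : ¬ p ∣ m := by
    rw [hm, hs]
    have := Nat.not_dvd_ordCompl hp hN1pos
    rwa [Nat.factorization_def _ hp] at this
  have hc2 : constantCoeff (R := PadicInt p) ((1 + X) ^ (p ^ s)) = 1 := by
    simp
  obtain ⟨hw, hw'⟩ := geom_unit p ((1 + X) ^ (p ^ s)) hc2 m h2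
  refine ⟨_, _, hu, hw, hu', ?_⟩
  rw [hw', ← pow_mul, hms]
end

section
/- Let N be prime and p ≥ 5 with N ≡ 1 mod p, and s = v_p(N-1). Then ℤ_p⟦λ - 1⟧/(λ + λ⁻¹ - λ^N - λ^{-N}) is isomorphic to ℤ_p⟦λ - 1⟧/((λ - 1)(λ^{p^s} - 1)). -/
open PowerSeries Finset

lemma padic_nat_unit (p : ℕ) [Fact p.Prime] (n : ℕ) (h : ¬ p ∣ n) :
    IsUnit (n : PadicInt p) := by
  by_contra hu
  rw [PadicInt.not_isUnit_iff] at hu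
  have : ((n : ℤ) : PadicInt p) = (n : PadicInt p) := by push_cast; ring
  rw [← this, PadicInt.norm_int_lt_one_iff_dvd] at hu
  exact h (Int.natCast_dvd_natCast.mp hu)

/-- With `λ = 1 + X` a unit of `ℤ_p⟦λ - 1⟧`, the quotient rings
`ℤ_p⟦λ - 1⟧/(λ + λ⁻¹ - λ^N - λ^{-N})` and `ℤ_p⟦λ - 1⟧/((λ - 1)(λ^{p^s} - 1))` are
isomorphic, where `N ≡ 1 mod p` is prime, `p ≥ 5` is prime, and `s = v_p(N - 1)`. -/
theorem stmt_4 (p N : ℕ) [Fact p.Prime] (hN : N.Prime) (hp5 : 5 ≤ p)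
    (hdvd : p ∣ N - 1) (s : ℕ) (hs : s = padicValNat p (N - 1)) :
    Nonempty
      ((PowerSeries (PadicInt p) ⧸ Ideal.span
          {(1 + PowerSeries.X : PowerSeries (PadicInt p))
              + Ring.inverse (1 + PowerSeries.X : PowerSeries (PadicInt p))
              - (1 + PowerSeries.X) ^ N
              - (Ring.inverse (1 + PowerSeries.X : PowerSeries (PadicInt p))) ^ N})
        ≃+*
       (PowerSeries (PadicInt p) ⧸ Ideal.span
          {((1 + PowerSeries.X : PowerSeries (PadicInt p)) - 1)
              * ((1 + PowerSeries.X) ^ (p ^ s) - 1)})) := by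
  set L : PowerSeries (PadicInt p) := 1 + PowerSeries.X with hL
  have hN2 : 2 ≤ N := hN.two_le
  have hN1pos : N - 1 ≠ 0 := by omega
  -- λ is a unit
  have hLu : IsUnit L := by
    rw [PowerSeries.isUnit_iff_constantCoeff]
    simp [hL]
  set I : PowerSeries (PadicInt p) := Ring.inverse L with hI
  have hLI : L * I = 1 := Ring.mul_inverse_cancel _ hLu
  have hIu : IsUnit I := IsUnit.of_mul_eq_one (a := I) L (by rw [mul_comm]; exact hLI)
  -- the factorization N - 1 = p^s * m with p ∤ m
  set m : ℕ := (N - 1) / p ^ s with hm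
  have hms : p ^ s * m = N - 1 := by
    rw [hm, Nat.mul_div_cancel' (hs ▸ pow_padicValNat_dvd)]
  have hpm : ¬ p ∣ m := by
    intro hd
    obtain ⟨k, hk⟩ := hd
    have hd2 : p ^ (s + 1) ∣ N - 1 := ⟨k, by rw [← hms, hk]; ring⟩
    rw [hs] at hd2
    exact pow_succ_padicValNat_not_dvd hN1pos hd2
  -- p ∤ N + 1
  have hpN1 : ¬ p ∣ N + 1 := by
    intro hd
    have h2 : p ∣ 2 := by
      have := Nat.dvd_sub hd hdvd
      rwa [show N + 1 - (N - 1) = 2 by omega] at this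
    have := Nat.le_of_dvd (by norm_num) h2
    omega
  -- geometric sums
  set S1 : PowerSeries (PadicInt p) := ∑ i ∈ range (N + 1), L ^ i with hS1
  set S2 : PowerSeries (PadicInt p) := ∑ i ∈ range m, (L ^ p ^ s) ^ i with hS2
  have hS1u : IsUnit S1 := by
    rw [PowerSeries.isUnit_iff_constantCoeff]
    have : constantCoeff S1 = ((N + 1 : ℕ) : PadicInt p) := by
      simp [hS1, hL, map_sum]
    rw [this]
    exact padic_nat_unit p _ hpN1
  have hS2u : IsUnit S2 := by
    rw [PowerSeries.isUnit_iff_constantCoeff]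
    have : constantCoeff S2 = ((m : ℕ) : PadicInt p) := by
      simp [hS2, hL, map_sum]
    rw [this]
    exact padic_nat_unit p _ hpm
  set u : PowerSeries (PadicInt p) := -(I ^ N * S1 * S2) with hu
  have huu : IsUnit u := ((hIu.pow N).mul hS1u).mul hS2u |>.neg
  set f : PowerSeries (PadicInt p) := L + I - L ^ N - I ^ N with hf
  set g : PowerSeries (PadicInt p) := (L - 1) * (L ^ p ^ s - 1) with hg
  -- key identity
  have h1 : L ^ N * I ^ N = 1 := by rw [← mul_pow, hLI, one_pow]
  have hNsplit : L ^ N = L ^ (N - 1) * L := by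
    rw [← pow_succ]; congr 1; omega
  have h2 : L ^ N * I = L ^ (N - 1) := by
    rw [hNsplit, mul_assoc, hLI, mul_one]
  have hgeo1 : S1 * (L - 1) = L ^ (N - 1) * L * L - 1 := by
    rw [hS1, geom_sum_mul, ← pow_succ, ← pow_succ]
    congr 2
    omega
  have hgeo2 : S2 * (L ^ p ^ s - 1) = L ^ (N - 1) - 1 := by
    rw [hS2, geom_sum_mul, ← pow_mul, hms]
  have key : f = u * g := by
    refine (hLu.pow N).mul_left_cancel ?_
    have lhs : L ^ N * f = L ^ (N - 1) * L * L + L ^ (N - 1)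
        - (L ^ (N - 1) * L) * (L ^ (N - 1) * L) - 1 := by
      rw [hf, mul_sub, mul_sub, mul_add, h1, h2]
      rw [hNsplit]
    have rhs : L ^ N * (u * g) = -((S1 * (L - 1)) * (S2 * (L ^ p ^ s - 1)))
        * (L ^ N * I ^ N) := by rw [hu, hg]; ring
    rw [lhs, rhs, h1, hgeo1, hgeo2, mul_one]
    ring
  have hassoc : Associated g f := ⟨huu.unit, by rw [IsUnit.unit_spec, mul_comm]; exact key.symm⟩
  have hspan : Ideal.span {f} = Ideal.span {g} :=
    (Ideal.span_singleton_eq_span_singleton.mpr hassoc).symm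
  exact ⟨Ideal.quotEquivOfEq hspan⟩
end

section
/- Let p ≥ 5, s ≥ 1, 1 ≤ t ≤ s, ζ a primitive p^t-th root of unity, and set R = ℤ_p[ζ + ζ⁻¹], a discrete valuation ring with uniformizer ζ + ζ⁻¹ - 2. Let H(X,Y) = Σ_{i=0}^{r-1} Σ_j c_{i,j} X^i Y^j ∈ ℤ_p[X,Y] with r ≥ 2, such that c_{r-1,0} ∈ ℤ_p^× and c_{i,0} ∈ pℤ_p for 0 ≤ i ≤ r-2. Then H(X, ζ + ζ⁻¹ - 2), viewed in R[X], is (a unit multiple of) a distinguished polynomial of degree r-1. Moreover, if c_{0,1} ∈ ℤ_p^×, then H(X, ζ + ζ⁻¹ - 2) is an Eisenstein polynomial over R. -/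
section auxseq
variable {A : Type*} [CommRing A]

def sseq (w : A) : ℕ → A
  | 0 => 2
  | 1 => w + 2
  | (k+2) => (w + 2) * sseq w (k+1) - sseq w k

def bseq (w : A) : ℕ → A
  | 0 => 0
  | 1 => 1
  | (k+2) => (w + 2) * bseq w (k+1) - bseq w k + 2

lemma sseq_eq (w : A) : ∀ k, sseq w k = 2 + w * bseq w k
  | 0 => by simp [sseq, bseq]
  | 1 => by simp [sseq, bseq]; ring
  | (k+2) => by
    rw [sseq, bseq, sseq_eq w (k+1), sseq_eq w k]; ring

lemma bseq_sub_sq_mem (w : A) : ∀ k, bseq w k - ((k : ℕ) : A)^2 ∈ Ideal.span {w}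
  | 0 => by simp [bseq]
  | 1 => by simp [bseq]
  | (k+2) => by
    have h1 := bseq_sub_sq_mem w (k+1)
    have h2 := bseq_sub_sq_mem w k
    have key : bseq w (k+2) - (((k+2 : ℕ)) : A)^2 =
        w * bseq w (k+1) + 2*(bseq w (k+1) - (((k+1 : ℕ)) : A)^2) - (bseq w k - ((k : ℕ) : A)^2) := by
      rw [bseq]; push_cast; ring
    rw [key]
    exact Ideal.sub_mem _ (Ideal.add_mem _
      (Ideal.mem_span_singleton.2 (Dvd.intro _ rfl))
      (Ideal.mul_mem_left _ _ h1)) h2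

lemma map_sseq {B : Type*} [CommRing B] (f : A →+* B) (w : A) :
    ∀ k, f (sseq w k) = sseq (f w) k
  | 0 => by simp [sseq, map_ofNat]
  | 1 => by simp [sseq, map_ofNat]
  | (k+2) => by
    rw [sseq, sseq, map_sub, map_mul, map_add, map_ofNat, map_sseq f w (k+1), map_sseq f w k]

lemma sseq_val (z z' : A) (h : z * z' = 1) :
    ∀ k, sseq (z + z' - 2) k = z^k + z'^k
  | 0 => by norm_num [sseq]
  | 1 => by simp [sseq]
  | (k+2) => by
    rw [sseq, sseq_val z z' h (k+1), sseq_val z z' h k]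
    have e : z + z' - 2 + 2 = z + z' := by ring
    rw [e]
    linear_combination (z^k + z'^k) * h

end auxseq

lemma six_mul_sum_sq (n : ℕ) :
    6 * ∑ k ∈ Finset.range (n+1), k^2 = n * (n+1) * (2*n+1) := by
  induction n with
  | zero => simp
  | succ n ih => rw [Finset.sum_range_succ, Nat.mul_add, ih]; ring

lemma padic_mem_sq (p : ℕ) [Fact p.Prime] (hp5 : 5 ≤ p) (t : ℕ) (ht1 : 1 ≤ t)
    (K : Type) [Field K] [Algebra (PadicInt p) K]
    (ζ : K) (hζ : IsPrimitiveRoot ζ (p ^ t))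
    (A : Subalgebra (PadicInt p) K)
    (w : A) (hw : (w : K) = ζ + ζ⁻¹ - 2) :
    ((p : ℕ) : A) ∈ (Ideal.span {w})^2 := by
  have hp : p.Prime := Fact.out
  set I : Ideal A := Ideal.span {w} with hI
  set n : ℕ := (p-1)/2 with hn
  set q : ℕ := p^(t-1) with hq
  have hodd : p % 2 = 1 := Nat.odd_iff.1 (hp.odd_of_ne_two (by omega))
  have hpn : p = 2*n + 1 := by omega
  have hzne : ζ ≠ 0 := hζ.ne_zero (by positivity)
  have hzz : ζ * ζ⁻¹ = 1 := mul_inv_cancel₀ hzne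
  have hξ : IsPrimitiveRoot (ζ ^ q) p := hζ.pow (by positivity)
    (by rw [hq, ← pow_succ, Nat.sub_add_cancel ht1])
  set ξ : K := ζ ^ q with hxi
  -- the coercion ring hom
  set f : A →+* K := (Subalgebra.val A).toRingHom with hf
  have hfw : f w = ζ + ζ⁻¹ - 2 := hw
  have hval : ∀ m : ℕ, f (sseq w m) = ζ^m + (ζ⁻¹)^m := by
    intro m
    rw [map_sseq, hfw, sseq_val ζ ζ⁻¹ hzz]
  -- geometric sum
  have hgeom : ∑ j ∈ Finset.range p, ξ^j = 0 := hξ.geom_sum_eq_zero (by omega)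
  have hIco : ∑ j ∈ Finset.Ico 1 p, ξ^j = -1 := by
    have : ∑ j ∈ Finset.range p, ξ^j = ξ^0 + ∑ j ∈ Finset.Ico 1 p, ξ^j := by
      rw [Finset.range_eq_Ico, Finset.sum_eq_sum_Ico_succ_bot (by omega : 0 < p)]
    rw [this] at hgeom
    simp only [pow_zero] at hgeom
    linear_combination hgeom
  have hxne : ξ ≠ 0 := pow_ne_zero _ hzne
  have hinv : ∀ k ∈ Finset.Ico 1 (n+1), (ξ⁻¹)^k = ξ^(p-k) := by
    intro k hk
    rw [Finset.mem_Ico] at hk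
    have h1 : ξ^(p-k) * ξ^k = 1 := by
      rw [← pow_add, Nat.sub_add_cancel (by omega), hξ.pow_eq_one]
    rw [inv_pow]
    exact inv_eq_of_mul_eq_one_left h1
  have hre : ∑ k ∈ Finset.Ico 1 (n+1), ξ^(p-k) = ∑ j ∈ Finset.Ico (n+1) p, ξ^j := by
    apply Finset.sum_nbij' (fun k => p - k) (fun j => p - j)
    · intro k hk; rw [Finset.mem_Ico] at hk ⊢; omega
    · intro j hj; rw [Finset.mem_Ico] at hj ⊢; omega
    · intro k hk; rw [Finset.mem_Ico] at hk; omega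
    · intro j hj; rw [Finset.mem_Ico] at hj; omega
    · intro k hk; rfl
  have hsum2 : ∑ k ∈ Finset.Ico 1 (n+1), (ξ^k + (ξ⁻¹)^k) = -1 := by
    rw [Finset.sum_add_distrib, Finset.sum_congr rfl hinv, hre,
      Finset.sum_Ico_consecutive _ (by omega : 1 ≤ n+1) (by omega : n+1 ≤ p), hIco]
  -- transfer to A
  have hinj : Function.Injective f := Subtype.coe_injective
  have hcard : (Finset.Ico 1 (n+1)).card = n := by rw [Nat.card_Ico]; omega
  have hvalq : ∀ k : ℕ, f (sseq w (k*q)) = ξ^k + (ξ⁻¹)^k := by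
    intro k
    rw [hval, hxi, ← inv_pow, ← pow_mul, ← pow_mul, mul_comm q k]
  have hA1 : ∑ k ∈ Finset.Ico 1 (n+1), (sseq w (k*q) - 2) = -((p : ℕ) : A) := by
    apply hinj
    rw [map_sum, map_neg, map_natCast]
    have : ∀ k ∈ Finset.Ico 1 (n+1), f (sseq w (k*q) - 2) = (ξ^k + (ξ⁻¹)^k) - 2 := by
      intro k _; rw [map_sub, hvalq, map_ofNat]
    rw [Finset.sum_congr rfl this, Finset.sum_sub_distrib, hsum2, Finset.sum_const, hcard]
    rw [hpn]; push_cast; ring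
  set B : A := -∑ k ∈ Finset.Ico 1 (n+1), bseq w (k*q) with hB
  have hfact : ((p : ℕ) : A) = w * B := by
    have : ∀ k ∈ Finset.Ico 1 (n+1), sseq w (k*q) - 2 = w * bseq w (k*q) := by
      intro k _; rw [sseq_eq]; ring
    rw [Finset.sum_congr rfl this, ← Finset.mul_sum] at hA1
    rw [hB]; linear_combination hA1
  have hpI : ((p : ℕ) : A) ∈ I := by
    rw [hfact]; exact Ideal.mem_span_singleton.2 (Dvd.intro _ rfl)
  -- 6 is a unit in A
  have h6 : IsUnit (6 : A) := by
    have h6p : IsUnit (6 : PadicInt p) := by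
      by_contra h
      have hlt : ‖((6 : ℤ) : PadicInt p)‖ < 1 := by
        have := PadicInt.not_isUnit_iff.1 h
        simpa using this
      have hdvd : (p : ℤ) ∣ 6 := (PadicInt.norm_int_lt_one_iff_dvd 6).1 hlt
      have hd6 : p ∣ 6 := by exact_mod_cast hdvd
      have hle := Nat.le_of_dvd (by norm_num) hd6
      interval_cases p
      · norm_num at hd6
      · norm_num at hp
    have := h6p.map (algebraMap (PadicInt p) A)
    rwa [map_ofNat] at this
  set N : ℕ := ∑ k ∈ Finset.Ico 1 (n+1), (k*q)^2 with hN
  have hN6 : 6 * N = n*(n+1)*q^2*p := by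
    have e1 : N = (∑ k ∈ Finset.range (n+1), k^2) * q^2 := by
      rw [hN, Finset.sum_mul, Finset.range_eq_Ico,
        Finset.sum_eq_sum_Ico_succ_bot (by omega : 0 < n+1)]
      simp [mul_pow]
    rw [e1, ← mul_assoc, six_mul_sum_sq, hpn]; ring
  have hNI : ((N : ℕ) : A) ∈ I := by
    have h1 : (6 : A) * (N : A) = ((n*(n+1)*q^2 : ℕ) : A) * ((p : ℕ) : A) := by
      have hc := congrArg (fun m : ℕ => (m : A)) hN6
      push_cast at hc ⊢
      linear_combination hc
    have h2 : (6 : A) * (N : A) ∈ I := by rw [h1]; exact Ideal.mul_mem_left _ _ hpI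
    obtain ⟨u, hu⟩ := h6
    have : ((N : ℕ) : A) = ↑u⁻¹ * ((6 : A) * (N : A)) := by
      rw [← mul_assoc, ← hu, ← Units.val_mul, inv_mul_cancel, Units.val_one, one_mul]
    rw [this]
    exact Ideal.mul_mem_left _ _ h2
  have hBI : B ∈ I := by
    have hsmem : ∑ k ∈ Finset.Ico 1 (n+1), (bseq w (k*q) - (((k*q : ℕ)) : A)^2) ∈ I :=
      Ideal.sum_mem _ (fun k _ => bseq_sub_sq_mem w (k*q))
    have he : ∑ k ∈ Finset.Ico 1 (n+1), (bseq w (k*q) - (((k*q : ℕ)) : A)^2)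
        = -B - ((N : ℕ) : A) := by
      rw [Finset.sum_sub_distrib, hB, hN, neg_neg]
      push_cast
      ring
    have : -B ∈ I := by
      have := Ideal.add_mem _ hsmem hNI
      rw [he] at this
      simpa using this
    simpa using neg_mem this
  obtain ⟨y, hy⟩ := Ideal.mem_span_singleton.1 hBI
  rw [hfact, hy, Ideal.span_singleton_pow, Ideal.mem_span_singleton]
  exact ⟨y, by ring⟩

/-- Lemma 6.5: let `p ≥ 5`, `1 ≤ t ≤ s`, `ζ` a primitive `p^t`-th root of unity, and
`R = ℤ_p[ζ + ζ⁻¹]`, a DVR with uniformizer `w = ζ + ζ⁻¹ - 2`.  If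
`H(X,Y) = Σ_{i<r} Σ_j c_{i,j} X^i Y^j` with `c_{r-1,0}` a unit and `c_{i,0} ∈ pℤ_p` for
`i < r-1`, then `H(X, ζ + ζ⁻¹ - 2)` is (a unit multiple of) a distinguished polynomial of
degree `r - 1` over `R`; moreover if `c_{0,1}` is a unit, it is an Eisenstein polynomial
(constant term of valuation exactly 1). -/
theorem stmt_11 (p : ℕ) [Fact p.Prime] (hp5 : 5 ≤ p) (s t : ℕ) (ht1 : 1 ≤ t) (hts : t ≤ s)
    (K : Type) [Field K] [Algebra (PadicInt p) K]
    (ζ : K) (hζ : IsPrimitiveRoot ζ (p ^ t))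
    (A : Subalgebra (PadicInt p) K) (hA : A = Algebra.adjoin (PadicInt p) {ζ + ζ⁻¹})
    (hdvr : IsDiscreteValuationRing A)
    (w : A) (hw : (w : K) = ζ + ζ⁻¹ - 2) (hirr : Irreducible w)
    (r J : ℕ) (hr : 2 ≤ r) (hJ : 2 ≤ J)
    (c : ℕ → ℕ → PadicInt p)
    (htop : IsUnit (c (r - 1) 0))
    (hlow : ∀ i < r - 1, c i 0 ∈ Ideal.span {((p : ℕ) : PadicInt p)}) :
    (∑ i ∈ Finset.range r, Polynomial.C
          (∑ j ∈ Finset.range J, algebraMap (PadicInt p) A (c i j) * w ^ j)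
        * Polynomial.X ^ i : Polynomial A).natDegree = r - 1 ∧
    IsUnit (∑ i ∈ Finset.range r, Polynomial.C
          (∑ j ∈ Finset.range J, algebraMap (PadicInt p) A (c i j) * w ^ j)
        * Polynomial.X ^ i : Polynomial A).leadingCoeff ∧
    (∀ i < r - 1,
      (∑ i ∈ Finset.range r, Polynomial.C
            (∑ j ∈ Finset.range J, algebraMap (PadicInt p) A (c i j) * w ^ j)
          * Polynomial.X ^ i : Polynomial A).coeff i ∈ Ideal.span {w}) ∧
    (IsUnit (c 0 1) →
      ((∑ i ∈ Finset.range r, Polynomial.C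
            (∑ j ∈ Finset.range J, algebraMap (PadicInt p) A (c i j) * w ^ j)
          * Polynomial.X ^ i : Polynomial A).coeff 0 ∈ Ideal.span {w} ∧
       (∑ i ∈ Finset.range r, Polynomial.C
            (∑ j ∈ Finset.range J, algebraMap (PadicInt p) A (c i j) * w ^ j)
          * Polynomial.X ^ i : Polynomial A).coeff 0 ∉ (Ideal.span {w}) ^ 2)) := by
  haveI : IsLocalRing A := hdvr.toIsLocalRing
  set P : Polynomial A := (∑ i ∈ Finset.range r, Polynomial.C
          (∑ j ∈ Finset.range J, algebraMap (PadicInt p) A (c i j) * w ^ j)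
        * Polynomial.X ^ i : Polynomial A) with hP
  set d : ℕ → A := fun i => ∑ j ∈ Finset.range J, algebraMap (PadicInt p) A (c i j) * w ^ j
    with hd
  have hpI2 : ((p : ℕ) : A) ∈ (Ideal.span {w} : Ideal A)^2 := padic_mem_sq p hp5 t ht1 K ζ hζ A w hw
  have hI2I : (Ideal.span {w} : Ideal A)^2 ≤ Ideal.span {w} := Ideal.pow_le_self two_ne_zero
  have hpI : ((p : ℕ) : A) ∈ Ideal.span {w} := hI2I hpI2
  have hInotTop : (Ideal.span {w} : Ideal A) ≠ ⊤ := by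
    rw [Ne, Ideal.span_singleton_eq_top]
    exact hirr.not_isUnit
  have hImax : Ideal.span {w} ≤ IsLocalRing.maximalIdeal A :=
    IsLocalRing.le_maximalIdeal hInotTop
  have hcoeff : ∀ m, P.coeff m = if m < r then d m else 0 := by
    intro m
    rw [hP, Polynomial.finset_sum_coeff]
    simp only [Polynomial.coeff_C_mul, Polynomial.coeff_X_pow, mul_ite, mul_one, mul_zero]
    rw [show (fun i => if m = i then (∑ j ∈ Finset.range J,
        algebraMap (PadicInt p) A (c i j) * w ^ j) else 0)
      = fun i => if i = m then d i else 0 by funext i; rw [hd]; simp [eq_comm]]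
    rw [Finset.sum_ite_eq' (Finset.range r) m (fun i => d i)]
    simp [Finset.mem_range]
  have htail : ∀ i, ∑ j ∈ Finset.Ico 1 J, algebraMap (PadicInt p) A (c i j) * w ^ j
      ∈ Ideal.span {w} := by
    intro i
    refine Ideal.sum_mem _ (fun j hj => ?_)
    rw [Finset.mem_Ico] at hj
    exact Ideal.mem_span_singleton.2 ((dvd_pow_self w (by omega : j ≠ 0)).mul_left _)
  have hsplit : ∀ i, d i = algebraMap (PadicInt p) A (c i 0)
      + ∑ j ∈ Finset.Ico 1 J, algebraMap (PadicInt p) A (c i j) * w ^ j := by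
    intro i
    rw [hd]
    simp only []
    rw [Finset.range_eq_Ico, Finset.sum_eq_sum_Ico_succ_bot (by omega : 0 < J)]
    simp
  have hmap0 : ∀ i, i < r - 1 → algebraMap (PadicInt p) A (c i 0) ∈ (Ideal.span {w} : Ideal A)^2 := by
    intro i hi
    obtain ⟨x, hx⟩ := Ideal.mem_span_singleton.1 (hlow i hi)
    rw [hx, map_mul, map_natCast]
    exact Ideal.mul_mem_right _ _ hpI2
  have hdmem : ∀ i, i < r - 1 → d i ∈ Ideal.span {w} := fun i hi => by
    rw [hsplit i]
    exact Ideal.add_mem _ (hI2I (hmap0 i hi)) (htail i)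
  have hdunit : IsUnit (d (r-1)) := by
    have htu : IsUnit (algebraMap (PadicInt p) A (c (r-1) 0)) := htop.map _
    by_contra h
    have h1 : d (r-1) ∈ IsLocalRing.maximalIdeal A := (IsLocalRing.mem_maximalIdeal _).2 h
    have h2 := hImax (htail (r-1))
    have h3 : algebraMap (PadicInt p) A (c (r-1) 0) ∈ IsLocalRing.maximalIdeal A := by
      have he : algebraMap (PadicInt p) A (c (r-1) 0) = d (r-1)
          - ∑ j ∈ Finset.Ico 1 J, algebraMap (PadicInt p) A (c (r-1) j) * w ^ j := by
        rw [hsplit]; ring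
      rw [he]; exact Submodule.sub_mem _ h1 h2
    exact ((IsLocalRing.mem_maximalIdeal _).1 h3) htu
  have hdeg_le : P.natDegree ≤ r - 1 :=
    Polynomial.natDegree_le_iff_coeff_eq_zero.2 (fun m hm => by
      rw [hcoeff m, if_neg (by omega)])
  have hcr : P.coeff (r-1) = d (r-1) := by rw [hcoeff, if_pos (by omega)]
  have hdeg : P.natDegree = r - 1 :=
    Polynomial.natDegree_eq_of_le_of_coeff_ne_zero hdeg_le (by rw [hcr]; exact hdunit.ne_zero)
  refine ⟨hdeg, ?_, ?_, ?_⟩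
  · rw [Polynomial.leadingCoeff, hdeg, hcr]; exact hdunit
  · intro i hi
    rw [hcoeff, if_pos (by omega)]
    exact hdmem i hi
  · intro hc01
    have h0r : 0 < r - 1 := by omega
    refine ⟨by rw [hcoeff, if_pos (by omega)]; exact hdmem 0 h0r, ?_⟩
    rw [hcoeff, if_pos (by omega)]
    intro hmem
    have hsplit2 : d 0 = algebraMap (PadicInt p) A (c 0 0)
        + algebraMap (PadicInt p) A (c 0 1) * w
        + ∑ j ∈ Finset.Ico 2 J, algebraMap (PadicInt p) A (c 0 j) * w ^ j := by
      rw [hsplit 0, Finset.sum_eq_sum_Ico_succ_bot (by omega : 1 < J)]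
      ring
    have htail2 : ∑ j ∈ Finset.Ico 2 J, algebraMap (PadicInt p) A (c 0 j) * w ^ j
        ∈ (Ideal.span {w} : Ideal A)^2 := by
      refine Ideal.sum_mem _ (fun j hj => ?_)
      rw [Finset.mem_Ico] at hj
      rw [Ideal.span_singleton_pow, Ideal.mem_span_singleton]
      exact (pow_dvd_pow w hj.1).mul_left _
    have hcw : algebraMap (PadicInt p) A (c 0 1) * w ∈ (Ideal.span {w} : Ideal A)^2 := by
      have he : algebraMap (PadicInt p) A (c 0 1) * w = d 0
          - algebraMap (PadicInt p) A (c 0 0)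
          - ∑ j ∈ Finset.Ico 2 J, algebraMap (PadicInt p) A (c 0 j) * w ^ j := by
        rw [hsplit2]; ring
      rw [he]
      exact Submodule.sub_mem _ (Submodule.sub_mem _ hmem (hmap0 0 h0r)) htail2
    have hwI2 : w ∈ (Ideal.span {w} : Ideal A)^2 := by
      obtain ⟨u, hu⟩ := hc01.map (algebraMap (PadicInt p) A)
      have he : w = ↑u⁻¹ * (algebraMap (PadicInt p) A (c 0 1) * w) := by
        rw [← hu, ← mul_assoc, ← Units.val_mul, inv_mul_cancel, Units.val_one, one_mul]
      have hmm := Ideal.mul_mem_left _ (↑u⁻¹ : A) hcw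
      rwa [← he] at hmm
    rw [Ideal.span_singleton_pow, Ideal.mem_span_singleton] at hwI2
    obtain ⟨y, hy⟩ := hwI2
    have hw0 : w ≠ 0 := hirr.ne_zero
    have hz : w * (1 - w * y) = 0 := by linear_combination hy
    rcases mul_eq_zero.1 hz with h | h
    · exact hw0 h
    · exact hirr.not_isUnit (IsUnit.of_mul_eq_one (a := w) y (by linear_combination -h))
end

section
/- Let 𝒪 be a discrete valuation ring with valuation v, v(π) = 1 for a uniformizer π, and let H(X) ∈ 𝒪[X] be a monic polynomial of degree r-1 ≥ 3 whose non-leading coefficients all lie in the maximal ideal, and whose coefficient of X¹ has valuation exactly 1. Suppose H = h₁ ⋯ h_m is a factorization into monic irreducible polynomials in 𝒪[X]. If m ≥ 2, then m = 2, and exactly one factor has degree 1; the other factor is an Eisenstein polynomial of degree r-2. -/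
open Polynomial IsLocalRing

lemma aux_coeff_one_mul {O : Type} [CommRing O] (p q : Polynomial O) :
    (p * q).coeff 1 = p.coeff 0 * q.coeff 1 + p.coeff 1 * q.coeff 0 := by
  rw [Polynomial.coeff_mul]
  rw [show (Finset.HasAntidiagonal.antidiagonal 1 : Finset (ℕ × ℕ)) = {(0, 1), (1, 0)} by decide]
  simp

lemma aux_map_eq_X_pow (O : Type) [CommRing O] [IsLocalRing O] {n : ℕ} {H : Polynomial O}
    (hH : H.Monic) (hdeg : H.natDegree = n)
    (hdist : ∀ i < n, H.coeff i ∈ maximalIdeal O) :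
    H.map (residue O) = Polynomial.X ^ n := by
  ext i
  rcases lt_trichotomy i n with hi | rfl | hi
  · rw [coeff_map, coeff_X_pow, if_neg hi.ne]
    exact (residue_eq_zero_iff _).2 (hdist i hi)
  · rw [coeff_map, coeff_X_pow, if_pos rfl, ← hdeg, hH.coeff_natDegree, map_one]
  · rw [coeff_map, coeff_X_pow, if_neg hi.ne',
      Polynomial.coeff_eq_zero_of_natDegree_lt (hdeg ▸ hi), map_zero]

lemma aux_factor_dist (O : Type) [CommRing O] [IsLocalRing O] {n : ℕ} {H p : Polynomial O}
    (hH : H.Monic) (hdeg : H.natDegree = n)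
    (hdist : ∀ i < n, H.coeff i ∈ maximalIdeal O)
    (hp : p.Monic) (hdvd : p ∣ H) :
    ∀ i < p.natDegree, p.coeff i ∈ maximalIdeal O := by
  have hmap : p.map (residue O) ∣ Polynomial.X ^ n := by
    rw [← aux_map_eq_X_pow O hH hdeg hdist]
    exact Polynomial.map_dvd _ hdvd
  obtain ⟨j, hj, hassoc⟩ := (dvd_prime_pow Polynomial.prime_X n).1 hmap
  have hmon : (p.map (residue O)).Monic := hp.map _
  have heq : p.map (residue O) = Polynomial.X ^ j :=
    Polynomial.eq_of_monic_of_associated hmon (monic_X_pow j) hassoc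
  have hdegj : p.natDegree = j := by
    have := congrArg Polynomial.natDegree heq
    rwa [hp.natDegree_map, natDegree_X_pow] at this
  intro i hi
  have : residue O (p.coeff i) = 0 := by
    have := congrArg (fun q => Polynomial.coeff q i) heq
    simp only [coeff_map, coeff_X_pow] at this
    rw [this, if_neg]
    omega
  exact (residue_eq_zero_iff _).1 this

/-- Proposition 6.8 abstracted: over a DVR `𝒪`, let `H` be monic of degree `r - 1 ≥ 3`
with all non-leading coefficients in the maximal ideal, whose `X`-coefficient has
valuation exactly `1` (it lies in `𝔪` but not `𝔪²`).  If `H = h₀ ⋯ h_{m-1}` with each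
`h_k` monic irreducible and `m ≥ 2`, then `m = 2`, exactly one factor has degree `1`, and
the other factor is an Eisenstein polynomial of degree `r - 2`. -/
theorem stmt_15 (O : Type) [CommRing O] [IsDomain O] [IsDiscreteValuationRing O]
    (r : ℕ) (hr : 4 ≤ r)
    (H : Polynomial O) (hmonic : H.Monic) (hdeg : H.natDegree = r - 1)
    (hdist : ∀ i < r - 1, H.coeff i ∈ IsLocalRing.maximalIdeal O)
    (hc1 : H.coeff 1 ∈ IsLocalRing.maximalIdeal O)
    (hc1' : H.coeff 1 ∉ (IsLocalRing.maximalIdeal O) ^ 2)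
    (m : ℕ) (h : ℕ → Polynomial O)
    (hmon : ∀ k < m, (h k).Monic) (hirr : ∀ k < m, Irreducible (h k))
    (hfac : H = ∏ k ∈ Finset.range m, h k) (hm : 2 ≤ m) :
    m = 2 ∧
      (((h 0).natDegree = 1 ∧ (h 1).natDegree = r - 2 ∧
          (∀ i < r - 2, (h 1).coeff i ∈ IsLocalRing.maximalIdeal O) ∧
          (h 1).coeff 0 ∉ (IsLocalRing.maximalIdeal O) ^ 2) ∨
       ((h 1).natDegree = 1 ∧ (h 0).natDegree = r - 2 ∧
          (∀ i < r - 2, (h 0).coeff i ∈ IsLocalRing.maximalIdeal O) ∧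
          (h 0).coeff 0 ∉ (IsLocalRing.maximalIdeal O) ^ 2)) := by
  set 𝔪 := IsLocalRing.maximalIdeal O with h𝔪
  -- every factor is distinguished
  have hkd : ∀ k < m, ∀ i < (h k).natDegree, (h k).coeff i ∈ 𝔪 := by
    intro k hk
    refine aux_factor_dist O hmonic hdeg hdist (hmon k hk) ?_
    rw [hfac]
    exact Finset.dvd_prod_of_mem _ (Finset.mem_range.2 hk)
  -- every factor has positive degree
  have hdeg1 : ∀ k < m, 1 ≤ (h k).natDegree := by
    intro k hk
    rcases Nat.eq_zero_or_pos (h k).natDegree with hd | hd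
    · exact absurd ((hmon k hk).natDegree_eq_zero.1 hd ▸ isUnit_one) (hirr k hk).not_isUnit
    · exact hd
  have hcoeff0 : ∀ k < m, (h k).coeff 0 ∈ 𝔪 := fun k hk => hkd k hk 0 (hdeg1 k hk)
  have h0m : 0 < m := by omega
  have h1m : 1 < m := hm
  -- m = 2
  have hm2 : m = 2 := by
    by_contra hne
    have hm3 : 3 ≤ m := by omega
    have hsplit : H = (h 0 * h 1) * ∏ k ∈ Finset.Ico 2 m, h k := by
      rw [hfac, ← Finset.prod_range_mul_prod_Ico _ hm]
      congr 1
      simp [Finset.prod_range_succ]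
    have hQ0 : (∏ k ∈ Finset.Ico 2 m, h k).coeff 0 ∈ 𝔪 := by
      rw [Polynomial.coeff_zero_eq_eval_zero, Polynomial.eval_prod]
      have h2mem : (2 : ℕ) ∈ Finset.Ico 2 m := by
        simp [Finset.mem_Ico]; omega
      rw [← Finset.mul_prod_erase _ _ h2mem]
      refine Ideal.mul_mem_right _ _ ?_
      rw [← Polynomial.coeff_zero_eq_eval_zero]
      exact hcoeff0 2 (by omega)
    have hP1 : (h 0 * h 1).coeff 1 ∈ 𝔪 := by
      rw [aux_coeff_one_mul]
      exact Ideal.add_mem _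
        (Ideal.mul_mem_right _ _ (hcoeff0 0 h0m))
        (Ideal.mul_mem_left _ _ (hcoeff0 1 h1m))
    have hP0 : (h 0 * h 1).coeff 0 ∈ 𝔪 ^ 2 := by
      rw [Polynomial.mul_coeff_zero, pow_two]
      exact Ideal.mul_mem_mul (hcoeff0 0 h0m) (hcoeff0 1 h1m)
    have : H.coeff 1 ∈ 𝔪 ^ 2 := by
      rw [hsplit, aux_coeff_one_mul]
      refine Ideal.add_mem _ (Ideal.mul_mem_right _ _ hP0) ?_
      rw [pow_two]
      exact Ideal.mul_mem_mul hP1 hQ0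
    exact hc1' this
  subst hm2
  refine ⟨rfl, ?_⟩
  have hH : H = h 0 * h 1 := by
    rw [hfac]; simp [Finset.prod_range_succ]
  have hsum : (h 0).natDegree + (h 1).natDegree = r - 1 := by
    rw [← hdeg, hH, Polynomial.Monic.natDegree_mul (hmon 0 h0m) (hmon 1 h1m)]
  have hc1H : H.coeff 1 = (h 0).coeff 0 * (h 1).coeff 1 + (h 0).coeff 1 * (h 1).coeff 0 := by
    rw [hH, aux_coeff_one_mul]
  -- not both degrees ≥ 2
  have hnotboth : ¬(2 ≤ (h 0).natDegree ∧ 2 ≤ (h 1).natDegree) := by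
    rintro ⟨ha, hb⟩
    apply hc1'
    rw [hc1H, pow_two]
    exact Ideal.add_mem _
      (Ideal.mul_mem_mul (hcoeff0 0 h0m) (hkd 1 h1m 1 hb))
      (Ideal.mul_mem_mul (hkd 0 h0m 1 ha) (hcoeff0 1 h1m))
  have hd0 := hdeg1 0 h0m
  have hd1 := hdeg1 1 h1m
  have hcase : (h 0).natDegree = 1 ∨ (h 1).natDegree = 1 := by omega
  rcases hcase with hA | hB
  · left
    have hd1' : (h 1).natDegree = r - 2 := by omega
    refine ⟨hA, hd1', fun i hi => hkd 1 h1m i (by omega), ?_⟩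
    intro hc
    apply hc1'
    have hlead : (h 0).coeff 1 = 1 := by
      simpa [hA] using (hmon 0 h0m).coeff_natDegree
    have hc11 : (h 1).coeff 1 ∈ 𝔪 := hkd 1 h1m 1 (by omega)
    rw [hc1H, hlead, one_mul, pow_two]
    exact Ideal.add_mem _ (Ideal.mul_mem_mul (hcoeff0 0 h0m) hc11) (by rw [← pow_two]; exact hc)
  · right
    have hd0' : (h 0).natDegree = r - 2 := by omega
    refine ⟨hB, hd0', fun i hi => hkd 0 h0m i (by omega), ?_⟩
    intro hc
    apply hc1'
    have hlead : (h 1).coeff 1 = 1 := by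
      simpa [hB] using (hmon 1 h1m).coeff_natDegree
    have hc01 : (h 0).coeff 1 ∈ 𝔪 := hkd 0 h0m 1 (by omega)
    rw [hc1H, hlead, mul_one, pow_two]
    exact Ideal.add_mem _ (by rw [← pow_two]; exact hc) (Ideal.mul_mem_mul hc01 (hcoeff0 1 h1m))
end
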